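/- Consider the tree-based Ising posterior μ(·|Z) on Ω = {±1}^V for the depth-n binary tree, with inverse temperature β > 0, noise parameter δ ∈ (0,1/2), and observation data Z. Fix a path γ₁, γ₂, …, γ_k in the tree. Let σ^{(+)} (respectively σ^{(−)}) be distributed as μ(·|Z) conditioned additionally on σ(γ₁) = +1 (respectively σ(γ₁) = −1). Then for every 1 ≤ j ≤ k, d_TV( law of (σ^{(+)}(γ_j), …, σ^{(+)}(γ_k)), law of (σ^{(−)}(γ_j), …, σ^{(−)}(γ_k)) ) ≤ (1 − ε_β)^{j−1}, where ε_β = e^{−6β}. -/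

import Mathlib

open Finset

/-- Vertices of the complete binary tree of depth `n`: a vertex is a pair `(i,j)` where
`i ≤ n` is the depth and `j < 2^i` indexes the vertices at depth `i`. -/
abbrev Vtx (n : ℕ) := (i : Fin (n + 1)) × Fin (2 ^ (i : ℕ))

/-- The root `x₀₀` of the tree. -/
def root (n : ℕ) : Vtx n := ⟨0, ⟨0, by positivity⟩⟩

/-- A vertex is the root iff its depth is `0`. -/
def isRoot {n : ℕ} (v : Vtx n) : Prop := (v.1 : ℕ) = 0

instance {n : ℕ} (v : Vtx n) : Decidable (isRoot v) := by unfold isRoot; infer_instance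

/-- The parent of a vertex (the root is assigned itself). -/
def par {n : ℕ} (v : Vtx n) : Vtx n :=
  if h : (v.1 : ℕ) = 0 then v
  else
    ⟨⟨(v.1 : ℕ) - 1, by have := v.1.isLt; omega⟩,
     ⟨(v.2 : ℕ) / 2, by
        have hj := v.2.isLt
        have h2 : ((v.1 : ℕ) - 1) + 1 = (v.1 : ℕ) := by omega
        have hlt : (v.2 : ℕ) < 2 * 2 ^ ((v.1 : ℕ) - 1) := by
          have he : 2 * 2 ^ ((v.1 : ℕ) - 1) = 2 ^ (v.1 : ℕ) := by
            rw [← pow_succ', h2]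
          rw [he]; exact hj
        exact Nat.div_lt_of_lt_mul hlt⟩⟩

/-- Adjacency in the tree: `v` and `w` are joined by an edge iff one is the parent of
the other. -/
def Adj {n : ℕ} (v w : Vtx n) : Prop :=
  (¬ isRoot v ∧ par v = w) ∨ (¬ isRoot w ∧ par w = v)

/-- The spin `±1` attached to a Boolean value (`true ↦ +1`, `false ↦ −1`). -/
def spin (b : Bool) : ℝ := if b then 1 else -1

/-- `h_v(Z|s) = ∏_{j∈[n_v]} e^{ℓ(s,z_{vj})}`, the likelihood of the observations at
vertex `v` given spin `s`, where `ℓ(s,z) = log δ` if `s ≠ z` and `log(1−δ)` if `s = z`. -/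
noncomputable def hlik {n : ℕ} (δ : ℝ) (nobs : Vtx n → ℕ)
    (z : (v : Vtx n) → Fin (nobs v) → Bool) (v : Vtx n) (s : Bool) : ℝ :=
  ∏ j, if s = z v j then (1 - δ) else δ

/-- Unnormalized posterior weight of a configuration: Ising prior weight
`exp(β ∑_{(v,w)∈E} σ(v)σ(w))` (summing over edges as non-root vertices paired with their
parents) times the likelihood `∏_v h_v(Z|σ(v))`. -/
noncomputable def postW {n : ℕ} (β δ : ℝ) (nobs : Vtx n → ℕ)
    (z : (v : Vtx n) → Fin (nobs v) → Bool) (σ : Vtx n → Bool) : ℝ :=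
  Real.exp (β * ∑ v, if isRoot v then 0 else spin (σ v) * spin (σ (par v))) *
    ∏ v, hlik δ nobs z v (σ v)

/-- The tree-based Ising posterior `μ(σ|Z) ∝ f(σ) ∏_v h_v(Z|σ(v))` on `Ω = {±1}^V`. -/
noncomputable def post {n : ℕ} (β δ : ℝ) (nobs : Vtx n → ℕ)
    (z : (v : Vtx n) → Fin (nobs v) → Bool) (σ : Vtx n → Bool) : ℝ :=
  postW β δ nobs z σ / ∑ τ : Vtx n → Bool, postW β δ nobs z τ

/-- Total variation distance between probability mass functions on a finite type. -/
noncomputable def dTV {α : Type*} [Fintype α] (p q : α → ℝ) : ℝ :=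
  (∑ x, |p x - q x|) / 2

def dep {n : ℕ} (v : Vtx n) : ℕ := (v.1 : ℕ)

lemma dep_par {n : ℕ} (v : Vtx n) (h : ¬ isRoot v) : dep (par v) = dep v - 1 := by
  unfold par; rw [dif_neg (show ¬ ((v.1:ℕ) = 0) from h)]; rfl

lemma dep_par_le {n : ℕ} (v : Vtx n) : dep (par v) ≤ dep v := by
  by_cases h : isRoot v
  · unfold par; rw [dif_pos (show (v.1:ℕ) = 0 from h)]
  · rw [dep_par v h]; omega

def inDesc {n : ℕ} (c v : Vtx n) : Prop := dep c ≤ dep v ∧ par^[dep v - dep c] v = c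

instance {n : ℕ} (c v : Vtx n) : Decidable (inDesc c v) := by unfold inDesc; infer_instance

lemma inDesc_self {n : ℕ} (c : Vtx n) : inDesc c c := ⟨le_refl _, by simp⟩

lemma not_inDesc_par {n : ℕ} (c : Vtx n) (hc : ¬ isRoot c) : ¬ inDesc c (par c) := by
  intro ⟨h1, _⟩
  rw [dep_par c hc] at h1
  have : dep c ≠ 0 := hc
  omega

lemma inDesc_cut {n : ℕ} (c v : Vtx n) (hc : ¬ isRoot c) (hv : ¬ isRoot v) (hvc : v ≠ c) :
    inDesc c v ↔ inDesc c (par v) := by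
  have hdc : dep c ≠ 0 := hc
  have hdv : dep v ≠ 0 := hv
  have hdp : dep (par v) = dep v - 1 := dep_par v hv
  rcases lt_trichotomy (dep v) (dep c) with h | h | h
  · exact ⟨fun ⟨h1, _⟩ => by omega, fun ⟨h1, _⟩ => by omega⟩
  · constructor
    · intro ⟨h1, h2⟩
      simp only [h, Nat.sub_self, Function.iterate_zero, id_eq] at h2
      exact absurd h2 hvc
    · intro ⟨h1, _⟩; omega
  · have he : dep v - dep c = (dep (par v) - dep c) + 1 := by omega
    constructor
    · intro ⟨h1, h2⟩
      refine ⟨by omega, ?_⟩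
      rw [he, Function.iterate_succ_apply] at h2
      exact h2
    · intro ⟨h1, h2⟩
      refine ⟨by omega, ?_⟩
      rw [he, Function.iterate_succ_apply]
      exact h2

section Merge

variable {n : ℕ} (β δ : ℝ) (nobs : Vtx n → ℕ) (z : (v : Vtx n) → Fin (nobs v) → Bool)

/-- merge: take values on descendants of `c` from the second config. -/
def mrg (c : Vtx n) (σ σ' : Vtx n → Bool) : Vtx n → Bool :=
  fun v => if inDesc c v then σ' v else σ v

lemma mrg_invol (c : Vtx n) (σ σ' : Vtx n → Bool) :
    mrg c (mrg c σ σ') (mrg c σ' σ) = σ := by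
  funext v
  by_cases h : inDesc c v <;> simp [mrg, h]

/-- postW with the edge factor at `c` removed. -/
noncomputable def W0 (c : Vtx n) (σ : Vtx n → Bool) : ℝ :=
  Real.exp (β * ∑ v, if v = c then 0
      else if isRoot v then 0 else spin (σ v) * spin (σ (par v))) *
    ∏ v, hlik δ nobs z v (σ v)

lemma hlik_pos (hδ : δ ∈ Set.Ioo (0:ℝ) (1/2)) (v : Vtx n) (s : Bool) :
    0 < hlik δ nobs z v s := by
  obtain ⟨h1, h2⟩ := hδ
  unfold hlik
  apply Finset.prod_pos
  intro j _
  by_cases h : s = z v j <;> simp [h] <;> linarith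

lemma W0_pos (hδ : δ ∈ Set.Ioo (0:ℝ) (1/2)) (c : Vtx n) (σ : Vtx n → Bool) :
    0 < W0 β δ nobs z c σ := by
  unfold W0
  apply mul_pos (Real.exp_pos _)
  exact Finset.prod_pos fun v _ => hlik_pos δ nobs z hδ v _

lemma postW_eq_W0 (c : Vtx n) (hc : ¬ isRoot c) (σ : Vtx n → Bool) :
    postW β δ nobs z σ
      = Real.exp (β * (spin (σ c) * spin (σ (par c)))) * W0 β δ nobs z c σ := by
  unfold postW W0
  rw [← mul_assoc, ← Real.exp_add, ← mul_add]
  congr 2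
  congr 1
  have h1 : ∀ v : Vtx n, (if isRoot v then 0 else spin (σ v) * spin (σ (par v)))
      = (if v = c then spin (σ c) * spin (σ (par c)) else 0)
        + (if v = c then 0 else if isRoot v then 0 else spin (σ v) * spin (σ (par v))) := by
    intro v
    by_cases hv : v = c
    · subst hv; simp [hc]
    · simp [hv]
  calc (∑ v, if isRoot v then 0 else spin (σ v) * spin (σ (par v)))
      = ∑ v, ((if v = c then spin (σ c) * spin (σ (par c)) else 0)
        + (if v = c then 0 else if isRoot v then 0 else spin (σ v) * spin (σ (par v)))) := by
        exact Finset.sum_congr rfl fun v _ => h1 v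
    _ = (∑ v, if v = c then spin (σ c) * spin (σ (par c)) else 0)
        + ∑ v, (if v = c then 0 else if isRoot v then 0 else spin (σ v) * spin (σ (par v))) := by
        rw [Finset.sum_add_distrib]
    _ = spin (σ c) * spin (σ (par c))
        + ∑ v, (if v = c then 0 else if isRoot v then 0 else spin (σ v) * spin (σ (par v))) := by
        rw [Finset.sum_ite_eq' Finset.univ c]
        simp

lemma W0_mrg (c : Vtx n) (hc : ¬ isRoot c) (σ σ' : Vtx n → Bool) :
    W0 β δ nobs z c (mrg c σ σ') * W0 β δ nobs z c (mrg c σ' σ)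
      = W0 β δ nobs z c σ * W0 β δ nobs z c σ' := by
  have hsum : (∑ v : Vtx n, ((if v = c then 0 else if isRoot v then 0
          else spin (mrg c σ σ' v) * spin (mrg c σ σ' (par v)))
        + (if v = c then 0 else if isRoot v then 0
          else spin (mrg c σ' σ v) * spin (mrg c σ' σ (par v)))))
      = ∑ v : Vtx n, ((if v = c then 0 else if isRoot v then 0
          else spin (σ v) * spin (σ (par v)))
        + (if v = c then 0 else if isRoot v then 0
          else spin (σ' v) * spin (σ' (par v)))) := by
    apply Finset.sum_congr rfl
    intro v _
    by_cases hv : v = c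
    · simp [hv]
    · by_cases hr : isRoot v
      · simp [hv, hr]
      · by_cases hd : inDesc c v
        · have hdp : inDesc c (par v) := (inDesc_cut c v hc hr hv).1 hd
          simp only [if_neg hv, if_neg hr, mrg, if_pos hd, if_pos hdp]
          try ring
        · have hdp : ¬ inDesc c (par v) := fun h => hd ((inDesc_cut c v hc hr hv).2 h)
          simp only [if_neg hv, if_neg hr, mrg, if_neg hd, if_neg hdp]
          try ring
  have hprod : (∏ v, hlik δ nobs z v (mrg c σ σ' v) * hlik δ nobs z v (mrg c σ' σ v))
      = ∏ v, hlik δ nobs z v (σ v) * hlik δ nobs z v (σ' v) := by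
    apply Finset.prod_congr rfl
    intro v _
    by_cases hd : inDesc c v <;> simp [mrg, hd] <;> ring
  unfold W0
  conv_lhs => rw [mul_mul_mul_comm]
  conv_rhs => rw [mul_mul_mul_comm]
  rw [← Real.exp_add, ← Real.exp_add,
    ← mul_add, ← mul_add, ← Finset.prod_mul_distrib, ← Finset.prod_mul_distrib,
    ← Finset.sum_add_distrib, ← Finset.sum_add_distrib, hsum, hprod]

set_option maxHeartbeats 1000000 in
lemma merge0 (c : Vtx n) (hc : ¬ isRoot c)
    (P P' Q Q' : (Vtx n → Bool) → Prop)
    [DecidablePred P] [DecidablePred P'] [DecidablePred Q] [DecidablePred Q']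
    (hP : ∀ σ τ : Vtx n → Bool, (∀ v, ¬ inDesc c v → σ v = τ v) → (P σ ↔ P τ))
    (hP' : ∀ σ τ : Vtx n → Bool, (∀ v, ¬ inDesc c v → σ v = τ v) → (P' σ ↔ P' τ))
    (hQ : ∀ σ τ : Vtx n → Bool, (∀ v, inDesc c v → σ v = τ v) → (Q σ ↔ Q τ))
    (hQ' : ∀ σ τ : Vtx n → Bool, (∀ v, inDesc c v → σ v = τ v) → (Q' σ ↔ Q' τ)) :
    (∑ σ : Vtx n → Bool, if P σ ∧ Q σ then W0 β δ nobs z c σ else 0)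
      * (∑ σ : Vtx n → Bool, if P' σ ∧ Q' σ then W0 β δ nobs z c σ else 0)
    = (∑ σ : Vtx n → Bool, if P σ ∧ Q' σ then W0 β δ nobs z c σ else 0)
      * (∑ σ : Vtx n → Bool, if P' σ ∧ Q σ then W0 β δ nobs z c σ else 0) := by
  have key : ∀ F G : (Vtx n → Bool) → ℝ, (∑ σ, F σ) * (∑ σ, G σ)
      = ∑ p : (Vtx n → Bool) × (Vtx n → Bool), F p.1 * G p.2 := by
    intro F G
    rw [Finset.sum_mul_sum]
    exact (Fintype.sum_prod_type (f := fun p : (Vtx n → Bool) × (Vtx n → Bool) => F p.1 * G p.2)).symm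
  rw [key, key]
  have hinv : Function.Involutive
      (fun p : (Vtx n → Bool) × (Vtx n → Bool) => (mrg c p.1 p.2, mrg c p.2 p.1)) := by
    intro p
    obtain ⟨σ, σ'⟩ := p
    simp only [Prod.mk.injEq]
    exact ⟨mrg_invol c σ σ', mrg_invol c σ' σ⟩
  apply Fintype.sum_equiv hinv.toPerm
  intro p
  obtain ⟨σ, σ'⟩ := p
  simp only [Function.Involutive.coe_toPerm]
  have hag1 : ∀ v, ¬ inDesc c v → (mrg c σ σ') v = σ v := fun v hv => if_neg hv
  have hag2 : ∀ v, inDesc c v → (mrg c σ σ') v = σ' v := fun v hv => if_pos hv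
  have hag3 : ∀ v, ¬ inDesc c v → (mrg c σ' σ) v = σ' v := fun v hv => if_neg hv
  have hag4 : ∀ v, inDesc c v → (mrg c σ' σ) v = σ v := fun v hv => if_pos hv
  have i1 : P (mrg c σ σ') ↔ P σ := ((hP _ _ hag1))
  have i2 : Q' (mrg c σ σ') ↔ Q' σ' := ((hQ' _ _ hag2))
  have i3 : P' (mrg c σ' σ) ↔ P' σ' := ((hP' _ _ hag3))
  have i4 : Q (mrg c σ' σ) ↔ Q σ := ((hQ _ _ hag4))
  simp only [ite_zero_mul_ite_zero]
  erw [ite_zero_mul_ite_zero]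
  refine if_congr ?_ (W0_mrg β δ nobs z c hc σ σ').symm rfl
  rw [i1, i2, i3, i4]
  tauto
end Merge

section Path

variable {n : ℕ} (β δ : ℝ) (nobs : Vtx n → ℕ) (z : (v : Vtx n) → Fin (nobs v) → Bool)
variable {k : ℕ} (γ : Fin k → Vtx n)

lemma cut_package (hinj : Function.Injective γ)
    (hpath : ∀ (i : ℕ) (h : i + 1 < k), Adj (γ ⟨i, Nat.lt_of_succ_lt h⟩) (γ ⟨i + 1, h⟩))
    (i : ℕ) (hi : i + 1 < k) :
    ∃ (S : Vtx n → Bool) (c : Vtx n),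
      (¬ isRoot c) ∧
      (∀ (m : ℕ) (hm : m < k), m ≤ i → S (γ ⟨m, hm⟩) = false) ∧
      (∀ (m : ℕ) (hm : m < k), i + 1 ≤ m → S (γ ⟨m, hm⟩) = true) ∧
      (∀ σ : Vtx n → Bool, postW β δ nobs z σ
          = Real.exp (β * (spin (σ (γ ⟨i, Nat.lt_of_succ_lt hi⟩)) * spin (σ (γ ⟨i+1, hi⟩))))
            * W0 β δ nobs z c σ) ∧
      (∀ (P P' Q Q' : (Vtx n → Bool) → Prop)
        (_ : DecidablePred P) (_ : DecidablePred P') (_ : DecidablePred Q) (_ : DecidablePred Q'),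
        (∀ σ τ : Vtx n → Bool, (∀ v, S v = false → σ v = τ v) → (P σ ↔ P τ)) →
        (∀ σ τ : Vtx n → Bool, (∀ v, S v = false → σ v = τ v) → (P' σ ↔ P' τ)) →
        (∀ σ τ : Vtx n → Bool, (∀ v, S v = true → σ v = τ v) → (Q σ ↔ Q τ)) →
        (∀ σ τ : Vtx n → Bool, (∀ v, S v = true → σ v = τ v) → (Q' σ ↔ Q' τ)) →
        (∑ σ : Vtx n → Bool, if P σ ∧ Q σ then W0 β δ nobs z c σ else 0)
          * (∑ σ : Vtx n → Bool, if P' σ ∧ Q' σ then W0 β δ nobs z c σ else 0)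
        = (∑ σ : Vtx n → Bool, if P σ ∧ Q' σ then W0 β δ nobs z c σ else 0)
          * (∑ σ : Vtx n → Bool, if P' σ ∧ Q σ then W0 β δ nobs z c σ else 0)) := by
  have hadj := hpath i hi
  -- determine the child of the cut edge
  rcases hadj with ⟨hnr, hpar⟩ | ⟨hnr, hpar⟩
  case inl =>
    -- c = γ i is the child, par c = γ (i+1); descendants of c are the LEFT side
    set c : Vtx n := γ ⟨i, Nat.lt_of_succ_lt hi⟩ with hc
    have hdesc_c : inDesc c c := inDesc_self c
    have hdesc_p : ¬ inDesc c (γ ⟨i+1, hi⟩) := by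
      rw [← hpar]; exact not_inDesc_par c hnr
    -- step lemma along the path
    have hstep : ∀ (m : ℕ) (hm : m + 1 < k), m ≠ i →
        (inDesc c (γ ⟨m, Nat.lt_of_succ_lt hm⟩) ↔ inDesc c (γ ⟨m+1, hm⟩)) := by
      intro m hm hne
      rcases hpath m hm with ⟨hnr', hpar'⟩ | ⟨hnr', hpar'⟩
      · -- γ m is child of this edge
        by_cases hd : γ ⟨m, Nat.lt_of_succ_lt hm⟩ = c
        · exfalso
          have := hinj hd
          have : m = i := by simpa using congrArg Fin.val this
          exact hne this
        · rw [inDesc_cut c _ hnr hnr' hd, hpar']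
      · -- γ (m+1) is child
        by_cases hd : γ ⟨m+1, hm⟩ = c
        · exfalso
          have h1 := hinj hd
          have : m + 1 = i := by simpa using congrArg Fin.val h1
          -- then par (γ (m+1)) = γ m and par c = γ (i+1): γ m = γ (i+1)
          have h2 : γ ⟨m, Nat.lt_of_succ_lt hm⟩ = γ ⟨i+1, hi⟩ := by
            rw [← hpar', ← hpar]
            exact congrArg par hd
          have h3 := congrArg Fin.val (hinj h2)
          simp at h3
          omega
        · rw [inDesc_cut c _ hnr hnr' hd, hpar']
    -- left side: descendants
    have hleft : ∀ (m : ℕ) (hm : m < k), m ≤ i → inDesc c (γ ⟨m, hm⟩) := by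
      have key : ∀ (d : ℕ) (m : ℕ) (hm : m < k), m + d = i → inDesc c (γ ⟨m, hm⟩) := by
        intro d
        induction d with
        | zero =>
          intro m hm hmd
          have : γ ⟨m, hm⟩ = c := by rw [hc]; congr 1; simp [Fin.mk.injEq]; omega
          rw [this]; exact hdesc_c
        | succ d ih =>
          intro m hm hmd
          have h1 := hstep m (by omega) (by omega)
          rw [h1]
          exact ih (m+1) (by omega) (by omega)
      intro m hm hmi
      exact key (i - m) m hm (by omega)
    have hright : ∀ (m : ℕ) (hm : m < k), i + 1 ≤ m → ¬ inDesc c (γ ⟨m, hm⟩) := by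
      have key : ∀ (d : ℕ) (m : ℕ) (hm : m < k), m = i + 1 + d → ¬ inDesc c (γ ⟨m, hm⟩) := by
        intro d
        induction d with
        | zero =>
          intro m hm hmd
          have : γ ⟨m, hm⟩ = γ ⟨i+1, hi⟩ := by congr 1; simp [Fin.mk.injEq]; omega
          rw [this]; exact hdesc_p
        | succ d ih =>
          intro m hm hmd
          have h1 := hstep (m-1) (by omega) (by omega)
          have he : γ ⟨m-1+1, by omega⟩ = γ ⟨m, hm⟩ := by congr 1; simp [Fin.mk.injEq]; omega
          rw [he] at h1
          rw [← h1]
          exact ih (m-1) (by omega) (by omega)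
      intro m hm hmi
      exact key (m - i - 1) m hm (by omega)
    refine ⟨fun v => ! decide (inDesc c v), c, hnr, ?_, ?_, ?_, ?_⟩
    · intro m hm hmi; simp [hleft m hm hmi]
    · intro m hm hmi; simp [hright m hm hmi]
    · intro σ
      rw [postW_eq_W0 β δ nobs z c hnr σ, hc, hpar]
    · intro P P' Q Q' iP iP' iQ iQ' hP hP' hQ hQ'
      -- descendants of c = S-false side; so P's are "Q-like" for merge0
      have hswap : ∀ (R : (Vtx n → Bool) → Prop),
          (∀ σ τ : Vtx n → Bool, (∀ v, (! decide (inDesc c v)) = false → σ v = τ v) → (R σ ↔ R τ)) →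
          (∀ σ τ : Vtx n → Bool, (∀ v, inDesc c v → σ v = τ v) → (R σ ↔ R τ)) := by
        intro R hR σ τ hag
        exact hR σ τ (fun v hv => hag v (by simpa using hv))
      have hswap' : ∀ (R : (Vtx n → Bool) → Prop),
          (∀ σ τ : Vtx n → Bool, (∀ v, (! decide (inDesc c v)) = true → σ v = τ v) → (R σ ↔ R τ)) →
          (∀ σ τ : Vtx n → Bool, (∀ v, ¬ inDesc c v → σ v = τ v) → (R σ ↔ R τ)) := by
        intro R hR σ τ hag
        exact hR σ τ (fun v hv => hag v (by simpa using hv))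
      have key := merge0 β δ nobs z c hnr Q Q' P P'
        (hswap' Q hQ) (hswap' Q' hQ') (hswap P hP) (hswap P' hP')
      -- key : Σ(Q∧P)·Σ(Q'∧P') = Σ(Q∧P')·Σ(Q'∧P)
      have e1 : ∀ (R R' : (Vtx n → Bool) → Prop) (_ : DecidablePred R) (_ : DecidablePred R'),
          (∑ σ : Vtx n → Bool, if R σ ∧ R' σ then W0 β δ nobs z c σ else 0)
          = (∑ σ : Vtx n → Bool, if R' σ ∧ R σ then W0 β δ nobs z c σ else 0) := by
        intro R R' _ _
        apply Finset.sum_congr rfl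
        intro σ _
        exact if_congr and_comm rfl rfl
      rw [e1 P Q iP iQ, e1 P' Q' iP' iQ', e1 P Q' iP iQ', e1 P' Q iP' iQ]
      rw [key]
      ring
  case inr =>
    -- c = γ (i+1) is the child, par c = γ i; descendants of c are the RIGHT side
    set c : Vtx n := γ ⟨i+1, hi⟩ with hc
    have hdesc_c : inDesc c c := inDesc_self c
    have hdesc_p : ¬ inDesc c (γ ⟨i, Nat.lt_of_succ_lt hi⟩) := by
      rw [← hpar]; exact not_inDesc_par c hnr
    have hstep : ∀ (m : ℕ) (hm : m + 1 < k), m ≠ i →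
        (inDesc c (γ ⟨m, Nat.lt_of_succ_lt hm⟩) ↔ inDesc c (γ ⟨m+1, hm⟩)) := by
      intro m hm hne
      rcases hpath m hm with ⟨hnr', hpar'⟩ | ⟨hnr', hpar'⟩
      · by_cases hd : γ ⟨m, Nat.lt_of_succ_lt hm⟩ = c
        · exfalso
          have h1 := hinj hd
          have hmi : m = i + 1 := by simpa using congrArg Fin.val h1
          have h2 : γ ⟨m+1, hm⟩ = γ ⟨i, Nat.lt_of_succ_lt hi⟩ := by
            rw [← hpar', ← hpar]
            exact congrArg par hd
          have h3 := congrArg Fin.val (hinj h2)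
          simp at h3
          omega
        · rw [inDesc_cut c _ hnr hnr' hd, hpar']
      · by_cases hd : γ ⟨m+1, hm⟩ = c
        · exfalso
          have h1 := hinj hd
          have hmi : m + 1 = i + 1 := by simpa using congrArg Fin.val h1
          omega
        · rw [inDesc_cut c _ hnr hnr' hd, hpar']
    have hleft : ∀ (m : ℕ) (hm : m < k), m ≤ i → ¬ inDesc c (γ ⟨m, hm⟩) := by
      have key : ∀ (d : ℕ) (m : ℕ) (hm : m < k), m + d = i → ¬ inDesc c (γ ⟨m, hm⟩) := by
        intro d
        induction d with
        | zero =>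
          intro m hm hmd
          have : γ ⟨m, hm⟩ = γ ⟨i, Nat.lt_of_succ_lt hi⟩ := by congr 1; simp [Fin.mk.injEq]; omega
          rw [this]; exact hdesc_p
        | succ d ih =>
          intro m hm hmd
          have h1 := hstep m (by omega) (by omega)
          rw [h1]
          exact ih (m+1) (by omega) (by omega)
      intro m hm hmi
      exact key (i - m) m hm (by omega)
    have hright : ∀ (m : ℕ) (hm : m < k), i + 1 ≤ m → inDesc c (γ ⟨m, hm⟩) := by
      have key : ∀ (d : ℕ) (m : ℕ) (hm : m < k), m = i + 1 + d → inDesc c (γ ⟨m, hm⟩) := by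
        intro d
        induction d with
        | zero =>
          intro m hm hmd
          have : γ ⟨m, hm⟩ = c := by rw [hc]; congr 1; simp [Fin.mk.injEq]; omega
          rw [this]; exact hdesc_c
        | succ d ih =>
          intro m hm hmd
          have h1 := hstep (m-1) (by omega) (by omega)
          have he : γ ⟨m-1+1, by omega⟩ = γ ⟨m, hm⟩ := by congr 1; simp [Fin.mk.injEq]; omega
          rw [he] at h1
          rw [← h1]
          exact ih (m-1) (by omega) (by omega)
      intro m hm hmi
      exact key (m - i - 1) m hm (by omega)
    refine ⟨fun v => decide (inDesc c v), c, hnr, ?_, ?_, ?_, ?_⟩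
    · intro m hm hmi; simp [hleft m hm hmi]
    · intro m hm hmi; simp [hright m hm hmi]
    · intro σ
      rw [postW_eq_W0 β δ nobs z c hnr σ, hc, hpar]
      congr 2
      ring
    · intro P P' Q Q' iP iP' iQ iQ' hP hP' hQ hQ'
      have hswap : ∀ (R : (Vtx n → Bool) → Prop),
          (∀ σ τ : Vtx n → Bool, (∀ v, (decide (inDesc c v)) = false → σ v = τ v) → (R σ ↔ R τ)) →
          (∀ σ τ : Vtx n → Bool, (∀ v, ¬ inDesc c v → σ v = τ v) → (R σ ↔ R τ)) := by
        intro R hR σ τ hag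
        exact hR σ τ (fun v hv => hag v (by simpa using hv))
      have hswap' : ∀ (R : (Vtx n → Bool) → Prop),
          (∀ σ τ : Vtx n → Bool, (∀ v, (decide (inDesc c v)) = true → σ v = τ v) → (R σ ↔ R τ)) →
          (∀ σ τ : Vtx n → Bool, (∀ v, inDesc c v → σ v = τ v) → (R σ ↔ R τ)) := by
        intro R hR σ τ hag
        exact hR σ τ (fun v hv => hag v (by simpa using hv))
      exact merge0 β δ nobs z c hnr P P' Q Q'
        (hswap P hP) (hswap P' hP') (hswap' Q hQ) (hswap' Q' hQ')

end Path
section Helpers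

variable {α : Type*} [Fintype α]

lemma pinpart (R : α → Prop) [DecidablePred R] (h : α → Bool) (w : α → ℝ) :
    ∑ x, (if R x then w x else 0) = ∑ b, ∑ x, if R x ∧ h x = b then w x else 0 := by
  rw [Finset.sum_comm]
  apply Finset.sum_congr rfl
  intro x _
  by_cases hR : R x
  · simp only [hR, true_and]
    rw [Fintype.sum_bool]
    cases hx : h x <;> simp
  · simp [hR]

lemma sum_funeq {q : ℕ} (x : Fin q → Bool) (F : (Fin q → Bool) → ℝ) :
    (∑ t : Fin q → Bool, if (∀ m, x m = t m) then F t else 0) = F x := by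
  have h : ∀ t : Fin q → Bool, (∀ m, x m = t m) ↔ x = t := by
    intro t; rw [funext_iff]
  simp only [h]
  simp

lemma sum_ite_pos (R : α → Prop) [DecidablePred R] (w : α → ℝ)
    (hw : ∀ x, 0 < w x) (x₀ : α) (h : R x₀) : 0 < ∑ x, if R x then w x else 0 := by
  apply Finset.sum_pos'
  · intro x _
    by_cases hR : R x <;> simp [hR, (hw x).le]
  · exact ⟨x₀, Finset.mem_univ _, by simp [h, hw x₀]⟩

lemma sum_ite_nonneg (R : α → Prop) [DecidablePred R] (w : α → ℝ)
    (hw : ∀ x, 0 ≤ w x) : 0 ≤ ∑ x, if R x then w x else 0 := by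
  apply Finset.sum_nonneg
  intro x _
  by_cases hR : R x <;> simp [hR, hw x]

lemma dTV_le_one (p q : α → ℝ) (hp : ∀ x, 0 ≤ p x) (hq : ∀ x, 0 ≤ q x)
    (hps : ∑ x, p x = 1) (hqs : ∑ x, q x = 1) : dTV p q ≤ 1 := by
  unfold dTV
  rw [div_le_one (by norm_num)]
  calc (∑ x, |p x - q x|) ≤ ∑ x, (p x + q x) := by
        apply Finset.sum_le_sum
        intro x _
        calc |p x - q x| ≤ |p x| + |q x| := abs_sub _ _
          _ = p x + q x := by rw [abs_of_nonneg (hp x), abs_of_nonneg (hq x)]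
    _ = 2 := by rw [Finset.sum_add_distrib, hps, hqs]; norm_num

end Helpers

lemma core_ineq (β x y : ℝ) (hβ : 0 < β) (hx : 0 < x) (hy : 0 < y) :
    |Real.exp β * x / (Real.exp β * x + Real.exp (-β) * y)
      - Real.exp (-β) * x / (Real.exp (-β) * x + Real.exp β * y)| ≤ 1 - Real.exp (-6*β) := by
  set a := Real.exp β with ha
  have ha1 : 1 < a := by
    rw [ha, show (1:ℝ) = Real.exp 0 by simp]
    exact Real.exp_lt_exp.mpr hβ
  have ha0 : 0 < a := by linarith
  have hainv : Real.exp (-β) = a⁻¹ := by rw [ha, ← Real.exp_neg]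
  set A := a ^ 2 with hA
  have hA1 : 1 < A := by nlinarith
  have hA0 : 0 < A := by nlinarith
  have hd1 : 0 < A * x + y := by positivity
  have hd2 : 0 < x + A * y := by positivity
  have e1 : Real.exp β * x / (Real.exp β * x + Real.exp (-β) * y) = A * x / (A * x + y) := by
    rw [hainv, ← ha, hA]
    rw [div_eq_div_iff (by positivity) hd1.ne']
    field_simp
    ring
  have e2 : Real.exp (-β) * x / (Real.exp (-β) * x + Real.exp β * y) = x / (x + A * y) := by
    rw [hainv, ← ha, hA]
    rw [div_eq_div_iff (by positivity) hd2.ne']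
    rw [inv_eq_one_div]
    field_simp
    rw [hA]
  rw [e1, e2]
  have h6 : A ^ 3 = Real.exp (6 * β) := by
    rw [hA, ← pow_mul, ha, show (6:ℝ)*β = (6:ℕ)*β by norm_num, Real.exp_nat_mul]
  have hexp6 : Real.exp (-6*β) = 1 / A ^ 3 := by
    rw [h6, show (-6:ℝ)*β = -(6*β) by ring, Real.exp_neg, one_div]
  rw [hexp6]
  have hA3 : A ≤ A ^ 3 := by nlinarith [sq_nonneg A, sq_nonneg (A-1), sq_nonneg (A+1)]
  have hmono : 1 / A ^ 3 ≤ 1 / A := by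
    apply div_le_div_of_nonneg_left (by norm_num) hA0 hA3
  have hlow : 0 ≤ A * x / (A * x + y) - x / (x + A * y) := by
    rw [sub_nonneg, div_le_div_iff₀ hd2 hd1]
    nlinarith [mul_pos hx hy, sq_nonneg A, mul_nonneg (mul_pos hx hy).le
      (show (0:ℝ) ≤ A^2 - 1 by nlinarith)]
  have key2 : (A*x/(A*x+y) - x/(x+A*y)) = x*y*(A^2-1)/((A*x+y)*(x+A*y)) := by
    field_simp
    ring
  have hup : A * x / (A * x + y) - x / (x + A * y) ≤ 1 - 1 / A := by
    rw [key2, show (1:ℝ) - 1/A = (A-1)/A by field_simp]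
    rw [div_le_div_iff₀ (by positivity) hA0]
    nlinarith [mul_nonneg (mul_nonneg (sub_nonneg.2 hA1.le) hA0.le) (sq_nonneg (x-y)),
      mul_nonneg (sub_nonneg.2 hA1.le) (mul_pos hx hy).le,
      mul_nonneg (sub_nonneg.2 hA1.le) (mul_nonneg hA0.le (mul_pos hx hy).le)]
  rw [abs_of_nonneg hlow]
  calc A * x / (A * x + y) - x / (x + A * y) ≤ 1 - 1/A := hup
    _ ≤ 1 - 1/A^3 := by linarith

lemma alg (β : ℝ) (hβ : 0 < β) (N : Bool → Bool → Bool → ℝ)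
    (A : Bool → Bool → ℝ) (hA : ∀ e s, 0 ≤ A e s)
    (C : Bool → ℝ) (hC : ∀ u, 0 < C u) (Z : Bool → ℝ) (hZ : ∀ e, 0 < Z e)
    (hN : ∀ e s u, N e s u = A e s * Real.exp (β * (spin s * spin u)) * C u)
    (hZsum : ∀ e, ∑ s, ∑ u, N e s u = Z e) :
    dTV (fun u => (∑ s, N true s u) / Z true) (fun u => (∑ s, N false s u) / Z false)
      ≤ (1 - Real.exp (-6*β)) *
        dTV (fun s => (∑ u, N true s u) / Z true) (fun s => (∑ u, N false s u) / Z false) := by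
  have hsp : ∀ s u : Bool, Real.exp (β * (spin s * spin u))
      = if s = u then Real.exp β else Real.exp (-β) := by
    intro s u; cases s <;> cases u <;> simp [spin] <;> norm_num
  set x := C true with hx
  set y := C false with hy
  set eβ := Real.exp β with heβ
  set enβ := Real.exp (-β) with henβ
  have heβ0 : 0 < eβ := Real.exp_pos _
  have henβ0 : 0 < enβ := Real.exp_pos _
  have hx0 : 0 < x := hC true
  have hy0 : 0 < y := hC false
  set T : Bool → ℝ := fun s => if s then eβ * x + enβ * y else enβ * x + eβ * y with hT
  have hT0 : ∀ s, 0 < T s := by intro s; cases s <;> simp [hT] <;> positivity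
  have hsumu : ∀ e s, (∑ u, N e s u) = A e s * T s := by
    intro e s
    rw [Fintype.sum_bool]
    cases s <;> simp [hN, hsp, hT] <;> ring
  have hZ' : ∀ e, A e true * T true + A e false * T false = Z e := by
    intro e
    have := hZsum e
    rw [Fintype.sum_bool, hsumu, hsumu] at this
    exact this
  set m : Bool → Bool → ℝ := fun e s => A e s * T s / Z e with hm
  have hm1 : ∀ e, m e true + m e false = 1 := by
    intro e
    rw [hm]
    rw [← add_div, div_eq_one_iff_eq (hZ e).ne']
    exact hZ' e
  set Δ := m true true - m false true with hΔ
  set bb : Bool → Bool → ℝ := fun s u =>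
    Real.exp (β * (spin s * spin u)) * C u / T s with hbb
  have hNdiv : ∀ e s u, N e s u / Z e = m e s * bb s u := by
    intro e s u
    rw [hN, hm, hbb]
    field_simp [(hT0 s).ne', (hZ e).ne']
  have hdiff : ∀ u, (∑ s, N true s u) / Z true - (∑ s, N false s u) / Z false
      = Δ * (bb true u - bb false u) := by
    intro u
    rw [Fintype.sum_bool, Fintype.sum_bool, add_div, add_div, hNdiv, hNdiv, hNdiv, hNdiv]
    have h1 : m true false = 1 - m true true := by have := hm1 true; linarith
    have h2 : m false false = 1 - m false true := by have := hm1 false; linarith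
    rw [h1, h2, hΔ]
    ring
  have hbbsum : ∀ s, bb s true + bb s false = 1 := by
    intro s
    rw [hbb]
    cases s <;> simp [hsp, hT] <;> field_simp <;> ring
  -- RHS dTV equals |Δ|
  have hrhs : dTV (fun s => (∑ u, N true s u) / Z true)
      (fun s => (∑ u, N false s u) / Z false) = |Δ| := by
    unfold dTV
    rw [Fintype.sum_bool]
    simp only [hsumu]
    have e1 : A true true * T true / Z true - A false true * T true / Z false = Δ := by
      rw [hΔ, hm]
    have e2 : A true false * T false / Z true - A false false * T false / Z false = -Δ := by
      have h1 : m true false = 1 - m true true := by have := hm1 true; linarith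
      have h2 : m false false = 1 - m false true := by have := hm1 false; linarith
      have : m true false - m false false = -Δ := by rw [h1, h2, hΔ]; ring
      rw [hm] at this
      simpa using this
    rw [e1, e2, abs_neg]
    ring
  have hlhs : dTV (fun u => (∑ s, N true s u) / Z true)
      (fun u => (∑ s, N false s u) / Z false) = |Δ| * |bb true true - bb false true| := by
    unfold dTV
    rw [Fintype.sum_bool, hdiff, hdiff]
    have h3 : bb true false - bb false false = -(bb true true - bb false true) := by
      have := hbbsum true
      have := hbbsum false
      linarith
    rw [h3, abs_mul, abs_mul, abs_neg]
    ring
  rw [hlhs, hrhs]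
  have hcore : |bb true true - bb false true| ≤ 1 - Real.exp (-6*β) := by
    have : bb true true = eβ * x / (eβ * x + enβ * y) := by simp [hbb, hsp, hT, ← hx]
    have h2 : bb false true = enβ * x / (enβ * x + eβ * y) := by simp [hbb, hsp, hT, ← hx]
    rw [this, h2, heβ, henβ]
    exact core_ineq β x y hβ hx0 hy0
  calc |Δ| * |bb true true - bb false true| ≤ |Δ| * (1 - Real.exp (-6*β)) := by
        apply mul_le_mul_of_nonneg_left hcore (abs_nonneg _)
    _ = (1 - Real.exp (-6*β)) * |Δ| := by ring

set_option maxHeartbeats 2000000 in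
lemma dstep {n : ℕ} (β δ : ℝ) (hβ : 0 < β) (hδ : δ ∈ Set.Ioo (0:ℝ) (1/2))
    (nobs : Vtx n → ℕ) (z : (v : Vtx n) → Fin (nobs v) → Bool)
    {k : ℕ} (γ : Fin k → Vtx n) (hinj : Function.Injective γ)
    (hpath : ∀ (i : ℕ) (h : i + 1 < k), Adj (γ ⟨i, Nat.lt_of_succ_lt h⟩) (γ ⟨i + 1, h⟩))
    (hk : 0 < k) (J : ℕ) (hJ1 : 1 ≤ J) (hJk : J ≤ k) :
    dTV
      (fun s : Bool => (∑ σ : Vtx n → Bool,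
          if σ (γ ⟨0, hk⟩) = true ∧ σ (γ ⟨J-1, by omega⟩) = s then postW β δ nobs z σ else 0)
        / (∑ σ : Vtx n → Bool, if σ (γ ⟨0, hk⟩) = true then postW β δ nobs z σ else 0))
      (fun s : Bool => (∑ σ : Vtx n → Bool,
          if σ (γ ⟨0, hk⟩) = false ∧ σ (γ ⟨J-1, by omega⟩) = s then postW β δ nobs z σ else 0)
        / (∑ σ : Vtx n → Bool, if σ (γ ⟨0, hk⟩) = false then postW β δ nobs z σ else 0))
      ≤ (1 - Real.exp (-6*β)) ^ (J-1) := by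
  have hWpos : ∀ σ : Vtx n → Bool, 0 < postW β δ nobs z σ := by
    intro σ
    unfold postW
    apply mul_pos (Real.exp_pos _)
    exact Finset.prod_pos fun v _ => hlik_pos δ nobs z hδ v _
  have hZpos : ∀ e : Bool, 0 < ∑ σ : Vtx n → Bool,
      if σ (γ ⟨0, hk⟩) = e then postW β δ nobs z σ else 0 := by
    intro e
    exact sum_ite_pos _ _ hWpos (fun _ => e) rfl
  have hee : Real.exp (-6*β) ≤ 1 := by
    have : Real.exp (-6*β) ≤ Real.exp 0 := Real.exp_le_exp.mpr (by linarith)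
    simpa using this
  revert hJ1 hJk
  induction J with
  | zero => intro h1 _; omega
  | succ J ih =>
    intro hJ1 hJk
    simp only [Nat.add_sub_cancel]
    by_cases hJ0 : J = 0
    · -- base case: J + 1 = 1
      subst hJ0
      have hbase : ∀ (e s : Bool), (∑ σ : Vtx n → Bool,
          if σ (γ ⟨0, hk⟩) = e ∧ σ (γ ⟨0, by omega⟩) = s then postW β δ nobs z σ else 0)
          = if s = e then (∑ σ : Vtx n → Bool,
              if σ (γ ⟨0, hk⟩) = e then postW β δ nobs z σ else 0) else 0 := by
        intro e s
        by_cases hse : s = e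
        · subst hse
          rw [if_pos rfl]
          apply Finset.sum_congr rfl
          intro σ _
          exact if_congr (by tauto) rfl rfl
        · rw [if_neg hse]
          apply Finset.sum_eq_zero
          intro σ _
          rw [if_neg]
          rintro ⟨h1, h2⟩
          exact hse (by rw [← h2, h1])
      have hdiv : ∀ (e s : Bool), (if s = e then (∑ σ : Vtx n → Bool,
            if σ (γ ⟨0, hk⟩) = e then postW β δ nobs z σ else 0) else 0)
          / (∑ σ : Vtx n → Bool, if σ (γ ⟨0, hk⟩) = e then postW β δ nobs z σ else 0)
          = if s = e then 1 else 0 := by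
        intro e s
        by_cases hse : s = e
        · simp [hse, div_self (hZpos e).ne']
        · simp [hse]
      simp only [hbase, hdiv]
      unfold dTV
      rw [Fintype.sum_bool]
      norm_num
    · -- inductive step
      have hJ1' : 1 ≤ J := by omega
      have hik : (J - 1) + 1 < k := by omega
      obtain ⟨S, c, hnr, hSL, hSR, hfac, hmerge⟩ :=
        cut_package β δ nobs z γ hinj hpath (J-1) hik
      have hyx : γ ⟨(J-1)+1, hik⟩ = γ ⟨J, by omega⟩ := by
        congr 1
        simp [Fin.mk.injEq]
        omega
      rw [hyx] at hfac
      set a : Vtx n := γ ⟨0, hk⟩ with ha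
      set x : Vtx n := γ ⟨J-1, by omega⟩ with hx
      set y : Vtx n := γ ⟨J, by omega⟩ with hy
      have haxy : a ≠ y ∧ x ≠ y := by
        constructor
        · intro h
          have := congrArg Fin.val (hinj h)
          simp at this
          omega
        · intro h
          have := congrArg Fin.val (hinj h)
          simp at this
          omega
      set V : (Vtx n → Bool) → ℝ := W0 β δ nobs z c with hV
      set W : (Vtx n → Bool) → ℝ := postW β δ nobs z with hW
      have hVpos : ∀ σ, 0 < V σ := fun σ => W0_pos β δ nobs z hδ c σ
      set N : Bool → Bool → Bool → ℝ := fun e s u =>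
        ∑ σ : Vtx n → Bool, if (σ a = e ∧ σ x = s) ∧ σ y = u then V σ else 0 with hN
      -- (P1)
      have P1 : ∀ e s, (∑ σ : Vtx n → Bool, if σ a = e ∧ σ x = s then W σ else 0)
          = ∑ u, Real.exp (β*(spin s * spin u)) * N e s u := by
        intro e s
        rw [pinpart (fun σ => σ a = e ∧ σ x = s) (fun σ => σ y) W]
        apply Finset.sum_congr rfl
        intro u _
        rw [hN, Finset.mul_sum]
        apply Finset.sum_congr rfl
        intro σ _
        by_cases hcond : (σ a = e ∧ σ x = s) ∧ σ y = u
        · obtain ⟨⟨h1, h2⟩, h3⟩ := hcond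
          rw [if_pos ⟨⟨h1, h2⟩, h3⟩, if_pos ⟨⟨h1, h2⟩, h3⟩, hfac σ, h2, h3]
        · rw [if_neg hcond, if_neg hcond, mul_zero]
      -- (P2)
      have P2 : ∀ e u, (∑ σ : Vtx n → Bool, if σ a = e ∧ σ y = u then W σ else 0)
          = ∑ s, Real.exp (β*(spin s * spin u)) * N e s u := by
        intro e u
        rw [pinpart (fun σ => σ a = e ∧ σ y = u) (fun σ => σ x) W]
        apply Finset.sum_congr rfl
        intro s _
        rw [hN, Finset.mul_sum]
        apply Finset.sum_congr rfl
        intro σ _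
        by_cases hcond : (σ a = e ∧ σ x = s) ∧ σ y = u
        · obtain ⟨⟨h1, h2⟩, h3⟩ := hcond
          rw [if_pos ⟨⟨h1, h3⟩, h2⟩, if_pos ⟨⟨h1, h2⟩, h3⟩, hfac σ, h2, h3]
        · rw [if_neg (by tauto), if_neg hcond, mul_zero]
      -- (P3) merge identity
      have P3 : ∀ e s u, N e s u * N true true true = N e s true * N true true u := by
        intro e s u
        rw [hN]
        have hSa : S a = false := hSL 0 hk (by omega)
        have hSx : S x = false := hSL (J-1) (by omega) (le_refl _)
        have hSy : S y = true := hSR J (by omega) (by omega)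
        exact hmerge (fun σ => σ a = e ∧ σ x = s) (fun σ => σ a = true ∧ σ x = true)
          (fun σ => σ y = u) (fun σ => σ y = true)
          (by infer_instance) (by infer_instance) (by infer_instance) (by infer_instance)
          (fun σ τ hag => by beta_reduce; rw [hag a hSa, hag x hSx])
          (fun σ τ hag => by beta_reduce; rw [hag a hSa, hag x hSx])
          (fun σ τ hag => by beta_reduce; rw [hag y hSy])
          (fun σ τ hag => by beta_reduce; rw [hag y hSy])
      -- positivity
      have P4 : ∀ u, 0 < N true true u := by
        intro u
        rw [hN]
        apply sum_ite_pos _ _ hVpos (fun v => if v = y then u else true)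
        refine ⟨⟨?_, ?_⟩, ?_⟩
        · beta_reduce; rw [if_neg haxy.1]
        · beta_reduce; rw [if_neg haxy.2]
        · beta_reduce; rw [if_pos rfl]
      have P5 : ∀ e s u, 0 ≤ N e s u := by
        intro e s u
        rw [hN]
        exact sum_ite_nonneg _ _ (fun σ => (hVpos σ).le)
      -- normalization
      have P7 : ∀ e, (∑ s, ∑ u, Real.exp (β*(spin s * spin u)) * N e s u)
          = ∑ σ : Vtx n → Bool, if σ a = e then W σ else 0 := by
        intro e
        rw [pinpart (fun σ => σ a = e) (fun σ => σ x) W]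
        apply Finset.sum_congr rfl
        intro s _
        rw [← P1 e s]
      -- apply the channel contraction
      have hdivN : ∀ e s u, N e s u = N e s true * N true true u / N true true true := by
        intro e s u
        rw [eq_div_iff (P4 true).ne']
        exact P3 e s u
      have halg := alg β hβ (fun e s u => Real.exp (β*(spin s * spin u)) * N e s u)
        (fun e s => N e s true / N true true true) (fun e s => div_nonneg (P5 e s true) (P4 true).le)
        (fun u => N true true u) P4
        (fun e => ∑ σ : Vtx n → Bool, if σ a = e then W σ else 0) hZpos
        (by
          intro e s u
          rw [hdivN e s u]
          ring)
        (by
          intro e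
          rw [P7 e])
      have eL : ∀ e : Bool, (fun u : Bool => (∑ σ : Vtx n → Bool,
            if σ a = e ∧ σ y = u then W σ else 0)
          / (∑ σ : Vtx n → Bool, if σ a = e then W σ else 0))
          = (fun u : Bool => (∑ s, Real.exp (β*(spin s * spin u)) * N e s u)
          / (∑ σ : Vtx n → Bool, if σ a = e then W σ else 0)) := by
        intro e
        funext u
        rw [P2 e u]
      have eR : ∀ e : Bool, (fun s : Bool => (∑ σ : Vtx n → Bool,
            if σ a = e ∧ σ x = s then W σ else 0)
          / (∑ σ : Vtx n → Bool, if σ a = e then W σ else 0))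
          = (fun s : Bool => (∑ u, Real.exp (β*(spin s * spin u)) * N e s u)
          / (∑ σ : Vtx n → Bool, if σ a = e then W σ else 0)) := by
        intro e
        funext s
        rw [P1 e s]
      have hih := ih hJ1' (by omega)
      refine le_trans ?_ (le_trans
        (mul_le_mul_of_nonneg_left hih (by linarith : (0:ℝ) ≤ 1 - Real.exp (-6*β))) ?_)
      · rw [eL true, eL false]
        refine le_trans halg ?_
        apply mul_le_mul_of_nonneg_left _ (by linarith : (0:ℝ) ≤ 1 - Real.exp (-6*β))
        rw [← eR true, ← eR false]
      · apply le_of_eq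
        rw [← pow_succ']
        congr 1
        omega

lemma pinpart' {α : Type*} [Fintype α] (h : α → Bool) (w : α → ℝ) :
    ∑ x, w x = ∑ b, ∑ x, if h x = b then w x else 0 := by
  rw [Finset.sum_comm]
  apply Finset.sum_congr rfl
  intro x _
  cases hx : h x <;> simp


set_option maxHeartbeats 2000000 in
lemma marg_eq {n : ℕ} (β δ : ℝ) (hβ : 0 < β) (hδ : δ ∈ Set.Ioo (0:ℝ) (1/2))
    (nobs : Vtx n → ℕ) (z : (v : Vtx n) → Fin (nobs v) → Bool)
    {k : ℕ} (γ : Fin k → Vtx n) (hinj : Function.Injective γ)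
    (hpath : ∀ (i : ℕ) (h : i + 1 < k), Adj (γ ⟨i, Nat.lt_of_succ_lt h⟩) (γ ⟨i + 1, h⟩))
    (j : ℕ) (hj2 : 2 ≤ j) (hjk : j ≤ k) :
    dTV
      (fun t : Fin (k - j + 1) → Bool =>
        (∑ σ : Vtx n → Bool,
            if σ (γ ⟨0, by omega⟩) = true ∧
                (∀ m : Fin (k - j + 1), σ (γ ⟨j - 1 + m.1, by have := m.2; omega⟩) = t m)
              then postW β δ nobs z σ else 0) /
        (∑ σ : Vtx n → Bool, if σ (γ ⟨0, by omega⟩) = true then postW β δ nobs z σ else 0))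
      (fun t : Fin (k - j + 1) → Bool =>
        (∑ σ : Vtx n → Bool,
            if σ (γ ⟨0, by omega⟩) = false ∧
                (∀ m : Fin (k - j + 1), σ (γ ⟨j - 1 + m.1, by have := m.2; omega⟩) = t m)
              then postW β δ nobs z σ else 0) /
        (∑ σ : Vtx n → Bool, if σ (γ ⟨0, by omega⟩) = false then postW β δ nobs z σ else 0))
    = dTV
      (fun s : Bool =>
        (∑ σ : Vtx n → Bool,
            if σ (γ ⟨0, by omega⟩) = true ∧ σ (γ ⟨j - 1, by omega⟩) = s
              then postW β δ nobs z σ else 0) /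
        (∑ σ : Vtx n → Bool, if σ (γ ⟨0, by omega⟩) = true then postW β δ nobs z σ else 0))
      (fun s : Bool =>
        (∑ σ : Vtx n → Bool,
            if σ (γ ⟨0, by omega⟩) = false ∧ σ (γ ⟨j - 1, by omega⟩) = s
              then postW β δ nobs z σ else 0) /
        (∑ σ : Vtx n → Bool, if σ (γ ⟨0, by omega⟩) = false then postW β δ nobs z σ else 0)) := by
  have hWpos : ∀ σ : Vtx n → Bool, 0 < postW β δ nobs z σ := by
    intro σ
    unfold postW
    apply mul_pos (Real.exp_pos _)
    exact Finset.prod_pos fun v _ => hlik_pos δ nobs z hδ v _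
  have hik : (j - 2) + 1 < k := by omega
  obtain ⟨S, c, hnr, hSL, hSR, hfac, hmerge⟩ :=
    cut_package β δ nobs z γ hinj hpath (j - 2) hik
  have hxy : γ ⟨(j-2)+1, hik⟩ = γ ⟨j - 1, by omega⟩ := by
    congr 1
    simp [Fin.mk.injEq]
    omega
  rw [hxy] at hfac
  set q : ℕ := k - j + 1 with hq
  have hq0 : 0 < q := by omega
  set a : Vtx n := γ ⟨0, by omega⟩ with ha
  set x : Vtx n := γ ⟨j - 2, by omega⟩ with hx
  set y : Vtx n := γ ⟨j - 1, by omega⟩ with hy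
  set vm : Fin q → Vtx n := fun m => γ ⟨j - 1 + m.1, by have := m.2; omega⟩ with hvm
  set V : (Vtx n → Bool) → ℝ := W0 β δ nobs z c with hV
  set W : (Vtx n → Bool) → ℝ := postW β δ nobs z with hW
  have hVpos : ∀ σ, 0 < V σ := fun σ => W0_pos β δ nobs z hδ c σ
  have hZpos : ∀ e : Bool, 0 < ∑ σ : Vtx n → Bool, if σ a = e then W σ else 0 :=
    fun e => sum_ite_pos _ _ hWpos (fun _ => e) rfl
  set M : Bool → Bool → (Fin q → Bool) → ℝ := fun e s t =>
    ∑ σ : Vtx n → Bool, if (σ a = e ∧ σ x = s) ∧ (∀ m, σ (vm m) = t m) then V σ else 0 with hM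
  have hSa : S a = false := hSL 0 (by omega) (by omega)
  have hSx : S x = false := hSL (j-2) (by omega) (le_refl _)
  have hSvm : ∀ m : Fin q, S (vm m) = true := by
    intro m
    exact hSR (j - 1 + m.1) (by have := m.2; omega) (by omega)
  -- g1 : numerator decomposition
  have g1 : ∀ (e : Bool) (t : Fin q → Bool),
      (∑ σ : Vtx n → Bool, if σ a = e ∧ (∀ m, σ (vm m) = t m) then W σ else 0)
      = ∑ s, Real.exp (β*(spin s * spin (t ⟨0, hq0⟩))) * M e s t := by
    intro e t
    rw [pinpart (fun σ => σ a = e ∧ (∀ m, σ (vm m) = t m)) (fun σ => σ x) W]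
    apply Finset.sum_congr rfl
    intro s _
    rw [hM, Finset.mul_sum]
    apply Finset.sum_congr rfl
    intro σ _
    by_cases hcond : (σ a = e ∧ σ x = s) ∧ (∀ m, σ (vm m) = t m)
    · obtain ⟨⟨h1, h2⟩, h3⟩ := hcond
      have hy0 : σ y = t ⟨0, hq0⟩ := h3 ⟨0, hq0⟩
      rw [if_pos ⟨⟨h1, h3⟩, h2⟩, if_pos ⟨⟨h1, h2⟩, h3⟩, hfac σ, h2, hy0]
    · rw [if_neg (by tauto), if_neg hcond, mul_zero]
  -- g2 : merge identity
  have g2 : ∀ (e s : Bool) (t : Fin q → Bool),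
      M e s t * M true true (fun _ => true)
      = M e s (fun _ => true) * M true true t := by
    intro e s t
    rw [hM]
    exact hmerge (fun σ => σ a = e ∧ σ x = s) (fun σ => σ a = true ∧ σ x = true)
      (fun σ => ∀ m, σ (vm m) = t m) (fun σ => ∀ m, σ (vm m) = true)
      (by infer_instance) (by infer_instance) (by infer_instance) (by infer_instance)
      (fun σ τ hag => by beta_reduce; rw [hag a hSa, hag x hSx])
      (fun σ τ hag => by beta_reduce; rw [hag a hSa, hag x hSx])
      (fun σ τ hag => by
        beta_reduce
        exact forall_congr' fun m => by rw [hag (vm m) (hSvm m)])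
      (fun σ τ hag => by
        beta_reduce
        exact forall_congr' fun m => by rw [hag (vm m) (hSvm m)])
  -- g3 : positivity
  have hav : ∀ m : Fin q, a ≠ vm m := by
    intro m h
    have := congrArg Fin.val (hinj h)
    simp at this
    omega
  have hxv : ∀ m : Fin q, x ≠ vm m := by
    intro m h
    have := congrArg Fin.val (hinj h)
    simp at this
    omega
  have hc0 : 0 < M true true (fun _ => true) := by
    rw [hM]
    apply sum_ite_pos _ _ hVpos (fun _ => true)
    exact ⟨⟨rfl, rfl⟩, fun m => rfl⟩
  have hCbar : ∀ t : Fin q → Bool, 0 < M true true t := by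
    intro t
    rw [hM]
    apply sum_ite_pos _ _ hVpos
      (fun v => if h : ∃ m : Fin q, v = vm m then t h.choose else true)
    refine ⟨⟨?_, ?_⟩, ?_⟩
    · beta_reduce
      rw [dif_neg]
      rintro ⟨m, hm⟩
      exact hav m hm
    · beta_reduce
      rw [dif_neg]
      rintro ⟨m, hm⟩
      exact hxv m hm
    · intro m
      beta_reduce
      have hex : ∃ m' : Fin q, vm m = vm m' := ⟨m, rfl⟩
      rw [dif_pos hex]
      have hch : hex.choose = m := by
        have h1 := hex.choose_spec
        have h2 := congrArg Fin.val (hinj h1)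
        simp at h2
        have : (hex.choose : Fin q).1 = m.1 := by omega
        exact Fin.ext (by omega)
      rw [hch]
  have hMnonneg : ∀ e s t, 0 ≤ M e s t := by
    intro e s t
    rw [hM]
    exact sum_ite_nonneg _ _ (fun σ => (hVpos σ).le)
  -- g4
  have g4 : ∀ e s t, M e s t = M e s (fun _ => true) * M true true t
      / M true true (fun _ => true) := by
    intro e s t
    rw [eq_div_iff hc0.ne']
    exact g2 e s t
  -- Φ
  set Φ : Bool → Bool → ℝ := fun e u =>
    ∑ s, Real.exp (β*(spin s * spin u)) * M e s (fun _ => true) with hΦ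
  have g5 : ∀ (e : Bool) (t : Fin q → Bool),
      (∑ σ : Vtx n → Bool, if σ a = e ∧ (∀ m, σ (vm m) = t m) then W σ else 0)
      = Φ e (t ⟨0, hq0⟩) * M true true t / M true true (fun _ => true) := by
    intro e t
    rw [g1 e t, hΦ]
    simp only
    rw [Finset.sum_mul, Finset.sum_div]
    apply Finset.sum_congr rfl
    intro s _
    rw [g4 e s t]
    ring
  -- Ĉ
  set Ch : Bool → ℝ := fun u =>
    ∑ t : Fin q → Bool, if t ⟨0, hq0⟩ = u then M true true t else 0 with hCh
  have hChnonneg : ∀ u, 0 ≤ Ch u := by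
    intro u
    rw [hCh]
    exact sum_ite_nonneg _ _ (fun t => (hCbar t).le)
  have ite_swap : ∀ (p p' : Prop) (_ : Decidable p) (_ : Decidable p') (w : ℝ),
      (if p then (if p' then w else 0) else 0) = if p' then (if p then w else 0) else 0 := by
    intro p p' _ _ w
    by_cases hp : p <;> by_cases hp' : p' <;> simp [hp, hp']
  -- g6 : marginal equals grouped numerators
  have g6 : ∀ (e u : Bool),
      (∑ σ : Vtx n → Bool, if σ a = e ∧ σ y = u then W σ else 0)
      = Φ e u * Ch u / M true true (fun _ => true) := by
    intro e u
    have stepA : (∑ σ : Vtx n → Bool, if σ a = e ∧ σ y = u then W σ else 0)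
        = ∑ t : Fin q → Bool, if t ⟨0, hq0⟩ = u then
            (∑ σ : Vtx n → Bool, if σ a = e ∧ (∀ m, σ (vm m) = t m) then W σ else 0) else 0 := by
      have inner : ∀ t : Fin q → Bool,
          (if t ⟨0, hq0⟩ = u then
            (∑ σ : Vtx n → Bool, if σ a = e ∧ (∀ m, σ (vm m) = t m) then W σ else 0) else 0)
          = ∑ σ : Vtx n → Bool, if t ⟨0, hq0⟩ = u then
              (if σ a = e ∧ (∀ m, σ (vm m) = t m) then W σ else 0) else 0 := by
        intro t
        by_cases h : t ⟨0, hq0⟩ = u <;> simp only [h, if_true, if_false, eq_self_iff_true, Finset.sum_const_zero]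
      rw [Finset.sum_congr rfl (fun t _ => inner t), Finset.sum_comm]
      apply Finset.sum_congr rfl
      intro σ _
      by_cases hA : σ a = e
      · simp only [hA, true_and]
        have hsw : ∀ t : Fin q → Bool,
            (if t ⟨0, hq0⟩ = u then (if (∀ m, σ (vm m) = t m) then W σ else 0) else 0)
            = if (∀ m, σ (vm m) = t m) then (if t ⟨0, hq0⟩ = u then W σ else 0) else 0 := by
          intro t
          exact ite_swap _ _ _ _ _
        rw [Finset.sum_congr rfl (fun t _ => hsw t),
          sum_funeq (fun m => σ (vm m)) (fun t => if t ⟨0, hq0⟩ = u then W σ else 0)]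
        rfl
      · simp [hA]
    have stepB : (∑ t : Fin q → Bool, if t ⟨0, hq0⟩ = u then
            (∑ σ : Vtx n → Bool, if σ a = e ∧ (∀ m, σ (vm m) = t m) then W σ else 0) else 0)
        = Φ e u * Ch u / M true true (fun _ => true) := by
      have per : ∀ t : Fin q → Bool,
          (if t ⟨0, hq0⟩ = u then
            (∑ σ : Vtx n → Bool, if σ a = e ∧ (∀ m, σ (vm m) = t m) then W σ else 0) else 0)
          = Φ e u * (if t ⟨0, hq0⟩ = u then M true true t else 0)
              / M true true (fun _ => true) := by
        intro t
        by_cases h : t ⟨0, hq0⟩ = u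
        · rw [if_pos h, if_pos h, g5 e t, h]
        · rw [if_neg h, if_neg h]
          simp
      rw [Finset.sum_congr rfl (fun t _ => per t), ← Finset.sum_div, ← Finset.mul_sum]
    rw [stepA, stepB]
  -- final assembly
  set Z : Bool → ℝ := fun e => ∑ σ : Vtx n → Bool, if σ a = e then W σ else 0 with hZ
  set D : Bool → ℝ := fun u => |Φ true u / Z true - Φ false u / Z false| with hD
  have keyT : ∀ t : Fin q → Bool,
      |(∑ σ : Vtx n → Bool, if σ a = true ∧ (∀ m, σ (vm m) = t m) then W σ else 0) / Z true
        - (∑ σ : Vtx n → Bool, if σ a = false ∧ (∀ m, σ (vm m) = t m) then W σ else 0) / Z false|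
      = D (t ⟨0, hq0⟩) * (M true true t / M true true (fun _ => true)) := by
    intro t
    rw [g5 true t, g5 false t, hD]
    have harr : (Φ true (t ⟨0, hq0⟩) * M true true t / M true true (fun _ => true)) / Z true
        - (Φ false (t ⟨0, hq0⟩) * M true true t / M true true (fun _ => true)) / Z false
        = (Φ true (t ⟨0, hq0⟩) / Z true - Φ false (t ⟨0, hq0⟩) / Z false)
          * (M true true t / M true true (fun _ => true)) := by
      ring
    rw [harr, abs_mul, abs_of_nonneg (div_nonneg (hCbar t).le hc0.le)]
  have keyU : ∀ u : Bool,
      |(∑ σ : Vtx n → Bool, if σ a = true ∧ σ y = u then W σ else 0) / Z true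
        - (∑ σ : Vtx n → Bool, if σ a = false ∧ σ y = u then W σ else 0) / Z false|
      = D u * (Ch u / M true true (fun _ => true)) := by
    intro u
    rw [g6 true u, g6 false u, hD]
    have harr : (Φ true u * Ch u / M true true (fun _ => true)) / Z true
        - (Φ false u * Ch u / M true true (fun _ => true)) / Z false
        = (Φ true u / Z true - Φ false u / Z false)
          * (Ch u / M true true (fun _ => true)) := by
      ring
    rw [harr, abs_mul, abs_of_nonneg (div_nonneg (hChnonneg u) hc0.le)]
  unfold dTV
  congr 1
  calc (∑ t : Fin q → Bool,
        |(∑ σ : Vtx n → Bool, if σ a = true ∧ (∀ m, σ (vm m) = t m) then W σ else 0) / Z true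
        - (∑ σ : Vtx n → Bool, if σ a = false ∧ (∀ m, σ (vm m) = t m) then W σ else 0) / Z false|)
      = ∑ t : Fin q → Bool, D (t ⟨0, hq0⟩) * (M true true t / M true true (fun _ => true)) :=
        Finset.sum_congr rfl (fun t _ => keyT t)
    _ = ∑ u, ∑ t : Fin q → Bool, if t ⟨0, hq0⟩ = u then
          D (t ⟨0, hq0⟩) * (M true true t / M true true (fun _ => true)) else 0 :=
        pinpart' (fun t : Fin q → Bool => t ⟨0, hq0⟩) _
    _ = ∑ u, D u * (Ch u / M true true (fun _ => true)) := by
        apply Finset.sum_congr rfl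
        intro u _
        have per : ∀ t : Fin q → Bool,
            (if t ⟨0, hq0⟩ = u then
              D (t ⟨0, hq0⟩) * (M true true t / M true true (fun _ => true)) else 0)
            = D u * ((if t ⟨0, hq0⟩ = u then M true true t else 0)
                / M true true (fun _ => true)) := by
          intro t
          by_cases h : t ⟨0, hq0⟩ = u
          · rw [if_pos h, if_pos h, h]
          · rw [if_neg h, if_neg h]
            simp
        rw [Finset.sum_congr rfl (fun t _ => per t)]
        rw [← Finset.mul_sum, ← Finset.sum_div]
    _ = ∑ u : Bool,
        |(∑ σ : Vtx n → Bool, if σ a = true ∧ σ y = u then W σ else 0) / Z true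
        - (∑ σ : Vtx n → Bool, if σ a = false ∧ σ y = u then W σ else 0) / Z false| :=
        Finset.sum_congr rfl (fun u _ => (keyU u).symm)

set_option maxHeartbeats 2000000 in
/-- For the tree-based Ising posterior `μ(·|Z)` and a path `γ₁,…,γ_k`
in the tree, let `σ^{(+)}` (resp. `σ^{(−)}`) be distributed as `μ(·|Z)` conditioned on
`σ(γ₁) = +1` (resp. `σ(γ₁) = −1`).  Then for every `1 ≤ j ≤ k`,
`d_TV(law(σ^{(+)}(γ_j),…,σ^{(+)}(γ_k)), law(σ^{(−)}(γ_j),…,σ^{(−)}(γ_k))) ≤ (1−ε_β)^{j−1}`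
with `ε_β = e^{−6β}`.  (Spins `±1` are modelled by `Bool`, `true ↦ +1`.) -/
theorem stmt4 (n : ℕ) (β δ : ℝ) (hβ : 0 < β) (hδ : δ ∈ Set.Ioo (0 : ℝ) (1/2))
    (nobs : Vtx n → ℕ) (z : (v : Vtx n) → Fin (nobs v) → Bool)
    (k : ℕ) (γ : Fin k → Vtx n) (hinj : Function.Injective γ)
    (hpath : ∀ (i : ℕ) (h : i + 1 < k), Adj (γ ⟨i, by omega⟩) (γ ⟨i + 1, h⟩))
    (j : ℕ) (hj1 : 1 ≤ j) (hjk : j ≤ k) :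
    dTV
      (fun t : Fin (k - j + 1) → Bool =>
        (∑ σ : Vtx n → Bool,
            if σ (γ ⟨0, by omega⟩) = true ∧
                (∀ m : Fin (k - j + 1), σ (γ ⟨j - 1 + m.1, by have := m.2; omega⟩) = t m)
              then post β δ nobs z σ else 0) /
        (∑ σ : Vtx n → Bool, if σ (γ ⟨0, by omega⟩) = true then post β δ nobs z σ else 0))
      (fun t : Fin (k - j + 1) → Bool =>
        (∑ σ : Vtx n → Bool,
            if σ (γ ⟨0, by omega⟩) = false ∧
                (∀ m : Fin (k - j + 1), σ (γ ⟨j - 1 + m.1, by have := m.2; omega⟩) = t m)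
              then post β δ nobs z σ else 0) /
        (∑ σ : Vtx n → Bool, if σ (γ ⟨0, by omega⟩) = false then post β δ nobs z σ else 0))
    ≤ (1 - Real.exp (-6 * β)) ^ (j - 1) := by
  have hWpos : ∀ σ : Vtx n → Bool, 0 < postW β δ nobs z σ := by
    intro σ
    unfold postW
    apply mul_pos (Real.exp_pos _)
    exact Finset.prod_pos fun v _ => hlik_pos δ nobs z hδ v _
  have hk : 0 < k := by omega
  have hZtot : 0 < ∑ τ : Vtx n → Bool, postW β δ nobs z τ :=
    Finset.sum_pos (fun τ _ => hWpos τ) Finset.univ_nonempty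
  have hZpos : ∀ e : Bool, 0 < ∑ σ : Vtx n → Bool,
      if σ (γ ⟨0, hk⟩) = e then postW β δ nobs z σ else 0 :=
    fun e => sum_ite_pos _ _ hWpos (fun _ => e) rfl
  have hnum : ∀ (e : Bool) (t : Fin (k - j + 1) → Bool),
      (∑ σ : Vtx n → Bool,
          if σ (γ ⟨0, by omega⟩) = e ∧
              (∀ m : Fin (k - j + 1), σ (γ ⟨j - 1 + m.1, by have := m.2; omega⟩) = t m)
            then post β δ nobs z σ else 0)
      = (∑ σ : Vtx n → Bool,
          if σ (γ ⟨0, by omega⟩) = e ∧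
              (∀ m : Fin (k - j + 1), σ (γ ⟨j - 1 + m.1, by have := m.2; omega⟩) = t m)
            then postW β δ nobs z σ else 0)
        / (∑ τ : Vtx n → Bool, postW β δ nobs z τ) := by
    intro e t
    rw [Finset.sum_div]
    apply Finset.sum_congr rfl
    intro σ _
    by_cases h : σ (γ ⟨0, by omega⟩) = e ∧
        (∀ m : Fin (k - j + 1), σ (γ ⟨j - 1 + m.1, by have := m.2; omega⟩) = t m)
      <;> simp [h, post]
  have hden : ∀ (e : Bool),
      (∑ σ : Vtx n → Bool, if σ (γ ⟨0, by omega⟩) = e then post β δ nobs z σ else 0)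
      = (∑ σ : Vtx n → Bool, if σ (γ ⟨0, by omega⟩) = e then postW β δ nobs z σ else 0)
        / (∑ τ : Vtx n → Bool, postW β δ nobs z τ) := by
    intro e
    rw [Finset.sum_div]
    apply Finset.sum_congr rfl
    intro σ _
    by_cases h : σ (γ ⟨0, by omega⟩) = e <;> simp [h, post]
  have hratio : ∀ A B : ℝ,
      (A / (∑ τ : Vtx n → Bool, postW β δ nobs z τ))
        / (B / (∑ τ : Vtx n → Bool, postW β δ nobs z τ)) = A / B := by
    intro A B
    rw [div_div_div_comm, div_self hZtot.ne', div_one]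
  have egoal : ∀ e : Bool,
      (fun t : Fin (k - j + 1) → Bool =>
        (∑ σ : Vtx n → Bool,
            if σ (γ ⟨0, by omega⟩) = e ∧
                (∀ m : Fin (k - j + 1), σ (γ ⟨j - 1 + m.1, by have := m.2; omega⟩) = t m)
              then post β δ nobs z σ else 0) /
        (∑ σ : Vtx n → Bool, if σ (γ ⟨0, by omega⟩) = e then post β δ nobs z σ else 0))
      = (fun t : Fin (k - j + 1) → Bool =>
        (∑ σ : Vtx n → Bool,
            if σ (γ ⟨0, by omega⟩) = e ∧
                (∀ m : Fin (k - j + 1), σ (γ ⟨j - 1 + m.1, by have := m.2; omega⟩) = t m)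
              then postW β δ nobs z σ else 0) /
        (∑ σ : Vtx n → Bool, if σ (γ ⟨0, by omega⟩) = e then postW β δ nobs z σ else 0)) := by
    intro e
    funext t
    rw [hnum e t, hden e, hratio]
  rw [egoal true, egoal false]
  by_cases hjone : j = 1
  · -- j = 1 : trivial bound
    subst hjone
    have hsum1 : ∀ e : Bool,
        (∑ t : Fin (k - 1 + 1) → Bool, ∑ σ : Vtx n → Bool,
            if σ (γ ⟨0, by omega⟩) = e ∧
                (∀ m : Fin (k - 1 + 1), σ (γ ⟨1 - 1 + m.1, by have := m.2; omega⟩) = t m)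
              then postW β δ nobs z σ else 0)
        = ∑ σ : Vtx n → Bool, if σ (γ ⟨0, hk⟩) = e then postW β δ nobs z σ else 0 := by
      intro e
      rw [Finset.sum_comm]
      apply Finset.sum_congr rfl
      intro σ _
      by_cases hA : σ (γ ⟨0, hk⟩) = e
      · rw [if_pos hA]
        simp only [hA, true_and]
        exact sum_funeq (fun m : Fin (k - 1 + 1) =>
          σ (γ ⟨1 - 1 + m.1, by have := m.2; omega⟩)) (fun _ => postW β δ nobs z σ)
      · simp [hA]
    have hbound : (1 - Real.exp (-6 * β)) ^ (1 - 1) = 1 := by norm_num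
    rw [hbound]
    apply dTV_le_one
    · intro t
      exact div_nonneg (sum_ite_nonneg _ _ (fun σ => (hWpos σ).le)) (hZpos true).le
    · intro t
      exact div_nonneg (sum_ite_nonneg _ _ (fun σ => (hWpos σ).le)) (hZpos false).le
    · rw [← Finset.sum_div, hsum1 true, div_self (hZpos true).ne']
    · rw [← Finset.sum_div, hsum1 false, div_self (hZpos false).ne']
  · -- j ≥ 2
    rw [marg_eq β δ hβ hδ nobs z γ hinj hpath j (by omega) hjk]
    exact dstep β δ hβ hδ nobs z γ hinj hpath hk j hj1 hjk
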